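/- For the fermionic swap P^f_{ab} = I − (c_a† − c_b†)(c_a − c_b), one has e^{−iθ P^f_{ab}} c_j† e^{iθ P^f_{ab}} = e^{iθ}(cos θ · c_j† − i sin θ · c_{σ_{ab}(j)}†) for all j and all real θ. -/

import Mathlib

open Matrix Nat

lemma exp_smul_of_sq_eq_one {m : Type*} [Fintype m] [DecidableEq m]
    (P : Matrix m m ℂ) (hP2 : P * P = 1) (θ : ℝ) :
    NormedSpace.exp ((Complex.I * (θ : ℂ)) • P) =
      Complex.cos (θ : ℂ) • 1 + (Complex.I * Complex.sin (θ : ℂ)) • P := by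
  rw [NormedSpace.exp_eq_tsum ℂ]
  refine HasSum.tsum_eq ?_
  have hPe : ∀ k : ℕ, P ^ (2 * k) = 1 := by
    intro k
    rw [pow_mul, pow_two, hP2, one_pow]
  have hPo : ∀ k : ℕ, P ^ (2 * k + 1) = P := by
    intro k
    rw [pow_succ, hPe, one_mul]
  have hz : ∀ k : ℕ, (Complex.I * (θ : ℂ)) ^ (2 * k) = (-1) ^ k * (θ : ℂ) ^ (2 * k) := by
    intro k
    rw [pow_mul, mul_pow, Complex.I_sq, pow_mul]
    ring
  have heven : HasSum (fun k : ℕ => (((2 * k)! : ℂ))⁻¹ • ((Complex.I * (θ : ℂ)) • P) ^ (2 * k))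
      (Complex.cos (θ : ℂ) • (1 : Matrix m m ℂ)) := by
    have := (Complex.hasSum_cos (θ : ℂ)).smul_const (1 : Matrix m m ℂ)
    convert this using 2 with k
    rw [smul_pow, hPe, hz, smul_smul]
    congr 1
    ring
  have hodd : HasSum (fun k : ℕ => (((2 * k + 1)! : ℂ))⁻¹ • ((Complex.I * (θ : ℂ)) • P) ^ (2 * k + 1))
      ((Complex.I * Complex.sin (θ : ℂ)) • P) := by
    have := ((Complex.hasSum_sin (θ : ℂ)).mul_left Complex.I).smul_const P
    convert this using 2 with k
    rw [smul_pow, hPo, pow_succ, hz, smul_smul]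
    congr 1
    ring
  exact HasSum.even_add_odd heven hodd

/-- For the fermionic swap `P^f_{ab}`, one has
`e^{−iθ P^f_{ab}} c_j† e^{iθ P^f_{ab}} = e^{iθ}(cos θ · c_j† − i sin θ · c_{σ_{ab}(j)}†)`. -/
theorem fermiSwap_exp_conjugation (n : ℕ)
    (c : Fin n → Matrix (Fin n → Bool) (Fin n → Bool) ℂ)
    (hCAR1 : ∀ i j, c i * (c j)ᴴ + (c j)ᴴ * c i =
      if i = j then (1 : Matrix (Fin n → Bool) (Fin n → Bool) ℂ) else 0)
    (hCAR2 : ∀ i j, (c i)ᴴ * (c j)ᴴ + (c j)ᴴ * (c i)ᴴ = 0)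
    (a b : Fin n) (hab : a ≠ b)
    (P : Matrix (Fin n → Bool) (Fin n → Bool) ℂ)
    (hP : P = 1 - ((c a)ᴴ - (c b)ᴴ) * (c a - c b))
    (θ : ℝ) (j : Fin n) :
    NormedSpace.exp ((-(Complex.I * (θ : ℂ))) • P) * (c j)ᴴ *
      NormedSpace.exp ((Complex.I * (θ : ℂ)) • P) =
    Complex.exp (Complex.I * (θ : ℂ)) •
      (Complex.cos (θ : ℂ) • (c j)ᴴ -
        (Complex.I * Complex.sin (θ : ℂ)) • (c (Equiv.swap a b j))ᴴ) := by
  set A := (c a)ᴴ - (c b)ᴴ with hA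
  set B := c a - c b with hB
  set C := (c j)ᴴ with hC
  set D := (c (Equiv.swap a b j))ᴴ with hD
  -- basic relations
  have hsq : ∀ i : Fin n, (c i)ᴴ * (c i)ᴴ = 0 := by
    intro i
    have h2 : (2 : ℂ) • ((c i)ᴴ * (c i)ᴴ) = 0 := by rw [two_smul]; exact hCAR2 i i
    simpa using (smul_eq_zero.mp h2).resolve_left two_ne_zero
  have hA2 : A * A = 0 := by
    have e : A * A = ((c a)ᴴ * (c a)ᴴ) + ((c b)ᴴ * (c b)ᴴ) -
        ((c a)ᴴ * (c b)ᴴ + (c b)ᴴ * (c a)ᴴ) := by rw [hA]; noncomm_ring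
    rw [e, hsq a, hsq b, hCAR2 a b]
    simp
  have hBA : B * A = (2 : ℂ) • (1 : Matrix (Fin n → Bool) (Fin n → Bool) ℂ) - A * B := by
    have e : B * A + A * B = (c a * (c a)ᴴ + (c a)ᴴ * c a) + (c b * (c b)ᴴ + (c b)ᴴ * c b)
        - (c a * (c b)ᴴ + (c b)ᴴ * c a) - (c b * (c a)ᴴ + (c a)ᴴ * c b) := by
      rw [hA, hB]; noncomm_ring
    have e2 : B * A + A * B = (2 : ℂ) • (1 : Matrix (Fin n → Bool) (Fin n → Bool) ℂ) := by
      rw [e, hCAR1 a a, hCAR1 b b, hCAR1 a b, hCAR1 b a]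
      simp [hab, Ne.symm hab, two_smul]
    exact eq_sub_of_add_eq e2
  have hABA : A * B * A = (2 : ℂ) • A := by
    rw [mul_assoc, hBA, mul_sub, mul_smul_comm, mul_one, ← mul_assoc, hA2, zero_mul, sub_zero]
  have hP2 : P * P = 1 := by
    have hXX : A * B * (A * B) = (2 : ℂ) • (A * B) := by
      rw [← mul_assoc, hABA, smul_mul_assoc]
    rw [hP]
    have e : (1 - A * B) * (1 - A * B) = 1 - A * B - A * B + A * B * (A * B) := by noncomm_ring
    rw [e, hXX]
    module
  have hPA : P * A = -A := by
    have e : (1 - A * B) * A = A - A * B * A := by noncomm_ring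
    rw [hP, e, hABA]
    module
  -- anticommutators with C
  have hAC : C * A = -(A * C) := by
    have e : A * C + C * A = ((c a)ᴴ * (c j)ᴴ + (c j)ᴴ * (c a)ᴴ)
        - ((c b)ᴴ * (c j)ᴴ + (c j)ᴴ * (c b)ᴴ) := by rw [hA, hC]; noncomm_ring
    have e2 : A * C + C * A = 0 := by rw [e, hCAR2 a j, hCAR2 b j]; simp
    exact eq_neg_of_add_eq_zero_right e2
  set S : Matrix (Fin n → Bool) (Fin n → Bool) ℂ := (if a = j then (1 : Matrix (Fin n → Bool) (Fin n → Bool) ℂ) else 0) - (if b = j then (1 : Matrix (Fin n → Bool) (Fin n → Bool) ℂ) else 0) with hS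
  have hBC : B * C = S - C * B := by
    have e : B * C + C * B = (c a * (c j)ᴴ + (c j)ᴴ * c a) - (c b * (c j)ᴴ + (c j)ᴴ * c b) := by
      rw [hB, hC]; noncomm_ring
    have e2 : B * C + C * B = S := by rw [e, hCAR1 a j, hCAR1 b j]
    exact eq_sub_of_add_eq e2
  have hAS : A * S = C - D := by
    by_cases haj : a = j
    · subst haj
      rw [hS, hD, hA, hC]
      simp [Ne.symm hab, Equiv.swap_apply_left]
    · by_cases hbj : b = j
      · subst hbj
        rw [hS, hD, hA, hC]
        simp [haj, Equiv.swap_apply_right]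
      · rw [hS, hD, hC]
        rw [Equiv.swap_apply_of_ne_of_ne (Ne.symm haj) (Ne.symm hbj)]
        simp [haj, hbj]
  have hcomm : C * P - P * C = C - D := by
    have e1 : C * P - P * C = A * (B * C) - (C * A) * B := by rw [hP]; noncomm_ring
    rw [e1, hBC, hAC, ← hAS]
    noncomm_ring
  have hPK : P * (C - D) = -(C - D) := by
    rw [← hAS, ← mul_assoc, hPA, neg_mul]
  have hPCP : P * (C * P) = D := by
    have e : C * P = P * C + (C - D) := by rw [← hcomm]; abel
    rw [e, mul_add, ← mul_assoc, hP2, one_mul, hPK]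
    abel
  -- exponentials
  have hEp := exp_smul_of_sq_eq_one P hP2 θ
  have hEm := exp_smul_of_sq_eq_one P hP2 (-θ)
  have hneg : (Complex.I * ((-θ : ℝ) : ℂ)) = -(Complex.I * (θ : ℂ)) := by push_cast; ring
  rw [hneg, Complex.ofReal_neg, Complex.cos_neg, Complex.sin_neg, mul_neg] at hEm
  rw [hEp, hEm]
  have he : Complex.exp (Complex.I * (θ : ℂ)) =
      Complex.cos (θ : ℂ) + Complex.I * Complex.sin (θ : ℂ) := by
    rw [mul_comm, Complex.exp_mul_I]; ring
  set co := Complex.cos (θ : ℂ)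
  set z := Complex.I * Complex.sin (θ : ℂ)
  have expand : (co • (1 : Matrix (Fin n → Bool) (Fin n → Bool) ℂ) + (-z) • P) * C * (co • (1 : Matrix (Fin n → Bool) (Fin n → Bool) ℂ) + z • P) =
      (co * co) • C + (co * z) • (C * P) - (co * z) • (P * C) - (z * z) • (P * (C * P)) := by
    simp only [add_mul, mul_add, smul_mul_assoc, mul_smul_comm, one_mul, mul_one, smul_smul,
      neg_smul, neg_mul, mul_neg, mul_assoc]
    module
  rw [expand, hPCP, he]
  have e : C * P = P * C + (C - D) := by rw [← hcomm]; abel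
  rw [e]
  match_scalars <;> ring
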